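/- Both of the following hold: q𝓜⁻¹K − q⁻¹K𝓜⁻¹ = (q − q⁻¹)I and q𝓜⁻¹B − q⁻¹B𝓜⁻¹ = (q − q⁻¹)I. -/

import Mathlib

theorem stmt_3
    {𝕂 : Type*} [Field 𝕂] {V : Type*} [AddCommGroup V] [Module 𝕂 V]
    [FiniteDimensional 𝕂 V]
    (d : ℕ) (hd : 1 ≤ d) (q a : 𝕂) (hq : q ≠ 0) (ha : a ≠ 0)
    (hq2 : ∀ i : ℕ, 1 ≤ i → i ≤ d → q ^ (2 * i) ≠ 1)
    (ha2 : ∀ i : ℤ, 1 - (d : ℤ) ≤ i → i ≤ (d : ℤ) - 1 → a ^ 2 ≠ q ^ (2 * i))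
    (K : Module.End 𝕂 V) (hK : IsUnit K)
    (U : ℕ → Submodule 𝕂 V)
    (hUne : ∀ i, i ≤ d → U i ≠ ⊥)
    (hUint : DirectSum.IsInternal (fun i : Fin (d + 1) => U i.1))
    (hKU : ∀ i, i ≤ d → ∀ v ∈ U i, K v = (q ^ ((d : ℤ) - 2 * (i : ℤ))) • v)
    (ψ : Module.End 𝕂 V)
    (hψ0 : ∀ v ∈ U 0, ψ v = 0)
    (hψU : ∀ i, 1 ≤ i → i ≤ d → ∀ v ∈ U i, ψ v ∈ U (i - 1))
    (hψnil : ψ ^ (d + 1) = 0)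
    (hKψ : K * ψ = q ^ 2 • (ψ * K))
    (hinv : ∀ x : 𝕂, IsUnit (1 - x • ψ))
    (B : Module.End 𝕂 V)
    (hB : B = (1 - (a * q) • ψ) * Ring.inverse (1 - (a⁻¹ * q) • ψ) * K)
    (M : Module.End 𝕂 V)
    (hM : M = (a - a⁻¹)⁻¹ • (a • K - a⁻¹ • B))
    (hMunit : IsUnit M):
    q • (Ring.inverse M * K) - q⁻¹ • (K * Ring.inverse M)
      = (q - q⁻¹) • (1 : Module.End 𝕂 V) ∧
    q • (Ring.inverse M * B) - q⁻¹ • (B * Ring.inverse M)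
      = (q - q⁻¹) • (1 : Module.End 𝕂 V) := by
  have hq2ne : (q ^ 2 : 𝕂) ≠ 0 := pow_ne_zero _ hq
  -- a² ≠ 1
  have ha1 : a ^ 2 ≠ 1 := by
    have h := ha2 0 (by omega) (by omega)
    simpa using h
  have haa : a - a⁻¹ ≠ 0 := by
    intro h
    apply ha1
    have hae : a = a⁻¹ := sub_eq_zero.mp h
    calc a ^ 2 = a * a := sq a
      _ = a * a⁻¹ := by rw [← hae]
      _ = 1 := mul_inv_cancel₀ ha
  set Kinv := Ring.inverse K with hKinvdef
  set P : Module.End 𝕂 V := 1 - (a * q) • ψ with hPdef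
  set Q : Module.End 𝕂 V := 1 - (a⁻¹ * q) • ψ with hQdef
  set Qinv := Ring.inverse Q with hQinvdef
  have hQu : IsUnit Q := hinv _
  have hQQ : Q * Qinv = 1 := Ring.mul_inverse_cancel _ hQu
  have hQQ' : Qinv * Q = 1 := Ring.inverse_mul_cancel _ hQu
  have hKK : K * Kinv = 1 := Ring.mul_inverse_cancel _ hK
  have hKK' : Kinv * K = 1 := Ring.inverse_mul_cancel _ hK
  -- P and Q commute
  have huv : ((a * q) • ψ) * ((a⁻¹ * q) • ψ) = ((a⁻¹ * q) • ψ) * ((a * q) • ψ) := by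
    rw [smul_mul_assoc, mul_smul_comm, smul_smul, smul_mul_assoc, mul_smul_comm, smul_smul]
    congr 1
    ring
  have hPQ : P * Q = Q * P := by
    rw [hPdef, hQdef]
    simp only [sub_mul, mul_sub, one_mul, mul_one]
    rw [huv]
    abel
  -- conjugation of ψ by K
  have hψK : ψ * K = (q ^ 2)⁻¹ • (K * ψ) := by
    rw [hKψ, smul_smul, inv_mul_cancel₀ hq2ne, one_smul]
  have hKψK : Kinv * ψ * K = (q ^ 2)⁻¹ • ψ := by
    rw [mul_assoc, hψK, mul_smul_comm, ← mul_assoc, hKK', one_mul]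
  have hKQK : Kinv * Q * K = 1 - (a⁻¹ * q⁻¹) • ψ := by
    have e : Kinv * Q * K = Kinv * K - (a⁻¹ * q) • (Kinv * ψ * K) := by
      rw [hQdef, mul_sub, sub_mul, mul_one, mul_smul_comm, smul_mul_assoc]
    rw [e, hKK', hKψK, smul_smul]
    have : a⁻¹ * q * (q ^ 2)⁻¹ = a⁻¹ * q⁻¹ := by
      field_simp
    rw [this]
  have hKPK : Kinv * P * K = 1 - (a * q⁻¹) • ψ := by
    have e : Kinv * P * K = Kinv * K - (a * q) • (Kinv * ψ * K) := by
      rw [hPdef, mul_sub, sub_mul, mul_one, mul_smul_comm, smul_mul_assoc]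
    rw [e, hKK', hKψK, smul_smul]
    have : a * q * (q ^ 2)⁻¹ = a * q⁻¹ := by
      field_simp
    rw [this]
  -- M = Qinv * K
  have hQPQ : Q * (P * Qinv * K) = P * K := by
    rw [← mul_assoc, ← mul_assoc, ← hPQ, mul_assoc P Q Qinv, hQQ, mul_one]
  have h2 : a • (Q * K) - a⁻¹ • (P * K) = (a - a⁻¹) • K := by
    have e1 : Q * K = K - (a⁻¹ * q) • (ψ * K) := by
      rw [hQdef, sub_mul, one_mul, smul_mul_assoc]
    have e2 : P * K = K - (a * q) • (ψ * K) := by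
      rw [hPdef, sub_mul, one_mul, smul_mul_assoc]
    rw [e1, e2, smul_sub, smul_sub, smul_smul, smul_smul, sub_smul]
    have : a * (a⁻¹ * q) = a⁻¹ * (a * q) := by ring
    rw [this]
    abel
  have hQM : Q * M = K := by
    rw [hM, hB, mul_smul_comm, mul_sub, mul_smul_comm, mul_smul_comm, hQPQ, h2,
      smul_smul, inv_mul_cancel₀ haa, one_smul]
  have hMeq : M = Qinv * K := by
    have h := congrArg (fun X => Qinv * X) hQM
    simp only [← mul_assoc, hQQ', one_mul] at h
    exact h
  have hMN : M * (Kinv * Q) = 1 := by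
    rw [hMeq, mul_assoc, ← mul_assoc K, hKK, one_mul, hQQ']
  have hMinv : Ring.inverse M = Kinv * Q := by
    have h1 : Ring.inverse M * M = 1 := Ring.inverse_mul_cancel _ hMunit
    calc Ring.inverse M = Ring.inverse M * (M * (Kinv * Q)) := by rw [hMN, mul_one]
      _ = (Ring.inverse M * M) * (Kinv * Q) := by rw [mul_assoc]
      _ = Kinv * Q := by rw [h1, one_mul]
  constructor
  · rw [hMinv, hKQK]
    have hKMi : K * (Kinv * Q) = Q := by rw [← mul_assoc, hKK, one_mul]
    rw [hKMi, hQdef, smul_sub, smul_sub, smul_smul, smul_smul, sub_smul]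
    have : q * (a⁻¹ * q⁻¹) = q⁻¹ * (a⁻¹ * q) := by ring
    rw [this]
    abel
  · rw [hMinv, hB]
    have e1 : Kinv * Q * (P * Qinv * K) = 1 - (a * q⁻¹) • ψ := by
      rw [mul_assoc, hQPQ, ← mul_assoc, hKPK]
    have e2 : P * Qinv * K * (Kinv * Q) = P := by
      rw [mul_assoc, mul_assoc, ← mul_assoc K, hKK, one_mul, hQQ', mul_one]
    rw [e1, e2, hPdef, smul_sub, smul_sub, smul_smul, smul_smul, sub_smul]
    have : q * (a * q⁻¹) = q⁻¹ * (a * q) := by ring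
    rw [this]
    abel
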